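/- Let n, ℓ ∈ ℕ, let v ∈ ℤ with gcd(v, ℓ) = 1 and let v̄ be an inverse of v modulo ℓ. Let r1, r2, d ∈ ℂ with Re(r1) > 0, Re(r2) > 0 and Re(d) > 0. Then the function 𝓔(s) has a simple pole at s = −r1, and lim_{s→−r1} (s + r1)·𝓔(s) = −[Γ(d + r1 + 1)/Γ(d + r2 + 1)]·(2π√n)^{−r1+r2−1}·ℓ^{−r2}·ζ(1 + r1), where ζ is the Riemann zeta function. -/

import Mathlib

open Real Filter Topology HurwitzZeta

noncomputable section

/-- The Estermann zeta function `E(s; v/ℓ, a)`, defined as a meromorphic function of `s` via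
Hurwitz zeta functions. -/
def Est (a : ℂ) (ℓ : ℕ) (v : ℤ) (s : ℂ) : ℂ :=
  (ℓ : ℂ) ^ (a - 2 * s) *
    ∑ m1 ∈ Finset.Icc 1 ℓ, ∑ m2 ∈ Finset.Icc 1 ℓ,
      Complex.exp (2 * (π : ℂ) * Complex.I * v * m1 * m2 / ℓ) *
        hurwitzZeta (((m1 : ℝ) / (ℓ : ℝ) : ℝ) : UnitAddCircle) (s - a) *
        hurwitzZeta (((m2 : ℝ) / (ℓ : ℝ) : ℝ) : UnitAddCircle) s

/-- `𝓔(s) = [Γ(d−s+1)/Γ(d+s+r1+r2+1)]·(2π√n/ℓ)^{2s+r1+r2−1}·E(1−s−r1; −v̄/ℓ, −r1)`. -/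
def calE (n ℓ : ℕ) (vbar : ℤ) (r1 r2 d : ℂ) (s : ℂ) : ℂ :=
  Complex.Gamma (d - s + 1) / Complex.Gamma (d + s + r1 + r2 + 1) *
    ((2 * π * Real.sqrt n / (ℓ : ℝ) : ℝ) : ℂ) ^ (2 * s + r1 + r2 - 1) *
    Est (-r1) ℓ (-vbar) (1 - s - r1)








lemma ne_neg_nat_of_re_pos {z : ℂ} (hz : 0 < z.re) : ∀ m : ℕ, z ≠ -m := by
  intro m h
  rw [h, Complex.neg_re, Complex.natCast_re] at hz
  have := Nat.cast_nonneg (α := ℝ) m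
  linarith


lemma sum_exp_eq (ℓ : ℕ) (hℓ : 0 < ℓ) (t : ℤ) :
    ∑ m2 ∈ Finset.Icc 1 ℓ, Complex.exp (2 * (π : ℂ) * Complex.I * t * m2 / ℓ) =
      if (ℓ : ℤ) ∣ t then (ℓ : ℂ) else 0 := by
  have hℓ0 : (ℓ : ℂ) ≠ 0 := Nat.cast_ne_zero.mpr hℓ.ne'
  set u : ℂ := Complex.exp (2 * (π : ℂ) * Complex.I * t / ℓ) with hu
  have hterm : ∀ m2 : ℕ, Complex.exp (2 * (π : ℂ) * Complex.I * t * m2 / ℓ) = u ^ m2 := by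
    intro m2
    rw [hu, ← Complex.exp_nat_mul]
    ring_nf
  simp only [hterm]
  by_cases hdvd : (ℓ : ℤ) ∣ t
  · obtain ⟨k, hk⟩ := hdvd
    have hu1 : u = 1 := by
      rw [hu]
      have : 2 * (π : ℂ) * Complex.I * t / ℓ = k * (2 * π * Complex.I) := by
        field_simp [hk]
        rw [hk]; push_cast; ring
      rw [this, Complex.exp_int_mul_two_pi_mul_I]
    rw [if_pos ⟨k, hk⟩]
    simp [hu1]
  · have hu1 : u ≠ 1 := by
      intro h
      rw [hu, Complex.exp_eq_one_iff] at h
      obtain ⟨m, hm⟩ := h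
      apply hdvd
      refine ⟨m, ?_⟩
      have h2 : (2 * (π : ℂ) * Complex.I) ≠ 0 := by
        simp [Real.pi_ne_zero, Complex.I_ne_zero, Complex.ofReal_ne_zero]
      have : (t : ℂ) = (ℓ : ℂ) * m := by
        field_simp at hm
        apply mul_left_cancel₀ h2
        linear_combination (2 * (π : ℂ) * Complex.I) * hm
      exact_mod_cast this
    have huℓ : u ^ ℓ = 1 := by
      rw [hu, ← Complex.exp_nat_mul]
      have : (ℓ : ℂ) * (2 * (π : ℂ) * Complex.I * t / ℓ) = t * (2 * π * Complex.I) := by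
        field_simp
      rw [this, Complex.exp_int_mul_two_pi_mul_I]
    have : ∑ m2 ∈ Finset.Icc 1 ℓ, u ^ m2 = (u ^ (ℓ + 1) - u ^ 1) / (u - 1) := by
      rw [← Finset.Ico_add_one_right_eq_Icc]
      exact geom_sum_Ico hu1 (by omega)
    rw [this, pow_succ, huℓ, if_neg hdvd]
    simp


lemma inner_sum_eq (ℓ : ℕ) (hℓ : 0 < ℓ) (v vbar : ℤ)
    (hvbar : v * vbar ≡ 1 [ZMOD (ℓ : ℤ)]) (m1 : ℕ) (hm1 : m1 ∈ Finset.Icc 1 ℓ) :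
    ∑ m2 ∈ Finset.Icc 1 ℓ,
        Complex.exp (2 * (π : ℂ) * Complex.I * ((-vbar : ℤ) : ℂ) * m1 * m2 / ℓ) =
      if m1 = ℓ then (ℓ : ℂ) else 0 := by
  have harg : ∀ m2 : ℕ, 2 * (π : ℂ) * Complex.I * ((-vbar : ℤ) : ℂ) * m1 * m2 / ℓ =
      2 * (π : ℂ) * Complex.I * ((-vbar * m1 : ℤ) : ℂ) * m2 / ℓ := by
    intro m2; push_cast; ring
  simp only [harg]
  rw [sum_exp_eq ℓ hℓ (-vbar * m1)]
  congr 1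
  simp only [eq_iff_iff]
  simp only [Finset.mem_Icc] at hm1
  constructor
  · intro hd
    have hd1 : (ℓ : ℤ) ∣ vbar * m1 := by
      have : -(-vbar * (m1:ℤ)) = vbar * m1 := by ring
      rw [← this]
      exact Dvd.dvd.neg_right hd
    have hd2 : (ℓ : ℤ) ∣ 1 - v * vbar := (Int.ModEq.dvd hvbar)
    have hd3 : (ℓ : ℤ) ∣ (m1 : ℤ) := by
      have : (m1 : ℤ) = v * (vbar * m1) + (1 - v * vbar) * m1 := by ring
      rw [this]
      exact dvd_add (hd1.mul_left v) (hd2.mul_right _)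
    have hd4 : ℓ ∣ m1 := Int.ofNat_dvd.mp (by exact_mod_cast hd3)
    exact le_antisymm hm1.2 (Nat.le_of_dvd (by omega) hd4)
  · rintro rfl
    exact ⟨-vbar, by ring⟩


lemma est_residue (ℓ : ℕ) (hℓ : 0 < ℓ) (vbar : ℤ) (r1 : ℂ) (hr1 : 0 < r1.re) :
    Tendsto (fun w => (w - 1) * Est (-r1) ℓ (-vbar) w) (𝓝[≠] (1 : ℂ))
      (𝓝 ((ℓ : ℂ) ^ (-r1 - 2 * 1) *
        ∑ m1 ∈ Finset.Icc 1 ℓ, ∑ m2 ∈ Finset.Icc 1 ℓ,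
          (Complex.exp (2 * (π : ℂ) * Complex.I * ((-vbar : ℤ) : ℂ) * m1 * m2 / ℓ) *
            hurwitzZeta (((m1 : ℝ) / (ℓ : ℝ) : ℝ) : UnitAddCircle) ((1 : ℂ) - -r1)) * 1)) := by
  have hℓ0 : (ℓ : ℂ) ≠ 0 := Nat.cast_ne_zero.mpr hℓ.ne'
  have hr1ne : r1 ≠ 0 := by intro h; rw [h] at hr1; simp at hr1
  have h1ne : (1 : ℂ) - -r1 ≠ 1 := by intro h; exact hr1ne (by linear_combination h)
  have hfun : ∀ w : ℂ, (w - 1) * Est (-r1) ℓ (-vbar) w =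
      (ℓ : ℂ) ^ (-r1 - 2 * w) *
        ∑ m1 ∈ Finset.Icc 1 ℓ, ∑ m2 ∈ Finset.Icc 1 ℓ,
          (Complex.exp (2 * (π : ℂ) * Complex.I * ((-vbar : ℤ) : ℂ) * m1 * m2 / ℓ) *
            hurwitzZeta (((m1 : ℝ) / (ℓ : ℝ) : ℝ) : UnitAddCircle) (w - -r1)) *
          ((w - 1) * hurwitzZeta (((m2 : ℝ) / (ℓ : ℝ) : ℝ) : UnitAddCircle) w) := by
    intro w
    rw [Est, mul_left_comm]
    congr 1
    rw [Finset.mul_sum]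
    refine Finset.sum_congr rfl fun m1 _ => ?_
    rw [Finset.mul_sum]
    refine Finset.sum_congr rfl fun m2 _ => ?_
    ring
  have h1 : Tendsto (fun w : ℂ => (ℓ : ℂ) ^ (-r1 - 2 * w)) (𝓝[≠] (1 : ℂ))
      (𝓝 ((ℓ : ℂ) ^ (-r1 - 2 * 1))) := by
    refine (ContinuousAt.tendsto ?_).mono_left nhdsWithin_le_nhds
    exact (continuousAt_const_cpow hℓ0).comp ((continuousAt_const.sub (continuousAt_const.mul continuousAt_id)) : ContinuousAt (fun w : ℂ => -r1 - 2 * w) 1)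
  have h2 : Tendsto (fun w : ℂ =>
        ∑ m1 ∈ Finset.Icc 1 ℓ, ∑ m2 ∈ Finset.Icc 1 ℓ,
          (Complex.exp (2 * (π : ℂ) * Complex.I * ((-vbar : ℤ) : ℂ) * m1 * m2 / ℓ) *
            hurwitzZeta (((m1 : ℝ) / (ℓ : ℝ) : ℝ) : UnitAddCircle) (w - -r1)) *
          ((w - 1) * hurwitzZeta (((m2 : ℝ) / (ℓ : ℝ) : ℝ) : UnitAddCircle) w))
      (𝓝[≠] (1 : ℂ))
      (𝓝 (∑ m1 ∈ Finset.Icc 1 ℓ, ∑ m2 ∈ Finset.Icc 1 ℓ,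
          (Complex.exp (2 * (π : ℂ) * Complex.I * ((-vbar : ℤ) : ℂ) * m1 * m2 / ℓ) *
            hurwitzZeta (((m1 : ℝ) / (ℓ : ℝ) : ℝ) : UnitAddCircle) ((1 : ℂ) - -r1)) * 1)) := by
    refine tendsto_finset_sum _ fun m1 _ => tendsto_finset_sum _ fun m2 _ => ?_
    refine Tendsto.mul (tendsto_const_nhds.mul ?_) (hurwitzZeta_residue_one _)
    refine (ContinuousAt.tendsto ?_).mono_left nhdsWithin_le_nhds
    exact ContinuousAt.comp (f := fun w : ℂ => w - -r1) (x := (1 : ℂ))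
      ((differentiableAt_hurwitzZeta _ h1ne).continuousAt)
      (continuousAt_id.sub continuousAt_const)
  exact (Tendsto.congr (fun w => (hfun w).symm) (h1.mul h2))


lemma sum_value (ℓ : ℕ) (hℓ : 0 < ℓ) (v vbar : ℤ)
    (hvbar : v * vbar ≡ 1 [ZMOD (ℓ : ℤ)]) (r1 : ℂ) :
    ∑ m1 ∈ Finset.Icc 1 ℓ, ∑ m2 ∈ Finset.Icc 1 ℓ,
        (Complex.exp (2 * (π : ℂ) * Complex.I * ((-vbar : ℤ) : ℂ) * m1 * m2 / ℓ) *
          hurwitzZeta (((m1 : ℝ) / (ℓ : ℝ) : ℝ) : UnitAddCircle) ((1 : ℂ) - -r1)) * 1 =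
      (ℓ : ℂ) * riemannZeta (1 + r1) := by
  have step1 : ∀ m1 ∈ Finset.Icc 1 ℓ,
      ∑ m2 ∈ Finset.Icc 1 ℓ,
        (Complex.exp (2 * (π : ℂ) * Complex.I * ((-vbar : ℤ) : ℂ) * m1 * m2 / ℓ) *
          hurwitzZeta (((m1 : ℝ) / (ℓ : ℝ) : ℝ) : UnitAddCircle) ((1 : ℂ) - -r1)) * 1 =
      if m1 = ℓ then hurwitzZeta (((m1 : ℝ) / (ℓ : ℝ) : ℝ) : UnitAddCircle) ((1 : ℂ) - -r1)
        * (ℓ : ℂ) else 0 := by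
    intro m1 hm1
    have : ∑ m2 ∈ Finset.Icc 1 ℓ,
        (Complex.exp (2 * (π : ℂ) * Complex.I * ((-vbar : ℤ) : ℂ) * m1 * m2 / ℓ) *
          hurwitzZeta (((m1 : ℝ) / (ℓ : ℝ) : ℝ) : UnitAddCircle) ((1 : ℂ) - -r1)) * 1 =
        hurwitzZeta (((m1 : ℝ) / (ℓ : ℝ) : ℝ) : UnitAddCircle) ((1 : ℂ) - -r1) *
        ∑ m2 ∈ Finset.Icc 1 ℓ,
          Complex.exp (2 * (π : ℂ) * Complex.I * ((-vbar : ℤ) : ℂ) * m1 * m2 / ℓ) := by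
      rw [Finset.mul_sum]
      exact Finset.sum_congr rfl fun m2 _ => by ring
    rw [this, inner_sum_eq ℓ hℓ v vbar hvbar m1 hm1, mul_ite, mul_zero]
  rw [Finset.sum_congr rfl step1, Finset.sum_ite_eq' (Finset.Icc 1 ℓ) ℓ
      (fun m1 => hurwitzZeta (((m1 : ℝ) / (ℓ : ℝ) : ℝ) : UnitAddCircle) ((1 : ℂ) - -r1) * (ℓ : ℂ)),
    if_pos (Finset.mem_Icc.mpr ⟨hℓ, le_refl ℓ⟩)]
  have hq : ((ℓ : ℝ) / (ℓ : ℝ) : ℝ) = 1 := div_self (by exact_mod_cast hℓ.ne')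
  rw [hq]
  have : ((1 : ℝ) : UnitAddCircle) = 0 := AddCircle.coe_period (1 : ℝ)
  rw [this, hurwitzZeta_zero]
  rw [show (1 : ℂ) - -r1 = 1 + r1 by ring]
  ring


/-- Residue of `𝓔` at the simple pole `s = −r1`. -/
theorem calE_residue_at_neg_r1
    (n ℓ : ℕ) (hn : 0 < n) (hℓ : 0 < ℓ)
    (v : ℤ) (hv : Int.gcd v ℓ = 1) (vbar : ℤ) (hvbar : v * vbar ≡ 1 [ZMOD (ℓ : ℤ)])
    (r1 r2 d : ℂ) (hr1 : 0 < r1.re) (hr2 : 0 < r2.re) (hd : 0 < d.re) :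
    Tendsto (fun s : ℂ => (s + r1) * calE n ℓ vbar r1 r2 d s) (𝓝[≠] (-r1))
      (𝓝 (-(Complex.Gamma (d + r1 + 1) / Complex.Gamma (d + r2 + 1)) *
        ((2 * π * Real.sqrt n : ℝ) : ℂ) ^ (-r1 + r2 - 1) * (ℓ : ℂ) ^ (-r2) *
        riemannZeta (1 + r1))) := by
  have hℓ0 : (ℓ : ℂ) ≠ 0 := Nat.cast_ne_zero.mpr hℓ.ne'
  have hℓR : (0 : ℝ) < (ℓ : ℝ) := by exact_mod_cast hℓ
  have hbR : (0 : ℝ) < 2 * π * Real.sqrt n := by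
    have : (0 : ℝ) < Real.sqrt n := Real.sqrt_pos.mpr (by exact_mod_cast hn)
    positivity
  have hbQR : (0 : ℝ) < 2 * π * Real.sqrt n / (ℓ : ℝ) := div_pos hbR hℓR
  have hbQ0 : ((2 * π * Real.sqrt n / (ℓ : ℝ) : ℝ) : ℂ) ≠ 0 := by
    simp only [ne_eq, Complex.ofReal_eq_zero]
    exact hbQR.ne'
  -- the Est residue, with the sum evaluated
  have hEst := est_residue ℓ hℓ vbar r1 hr1
  rw [sum_value ℓ hℓ v vbar hvbar r1] at hEst
  -- composition with w = 1 - s - r1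
  have hw : Tendsto (fun s : ℂ => 1 - s - r1) (𝓝[≠] (-r1)) (𝓝[≠] (1 : ℂ)) := by
    rw [tendsto_nhdsWithin_iff]
    constructor
    · have hc : ContinuousAt (fun s : ℂ => 1 - s - r1) (-r1) :=
        (continuousAt_const.sub continuousAt_id).sub continuousAt_const
      have := hc.tendsto.mono_left (nhdsWithin_le_nhds (s := {(-r1)}ᶜ))
      simpa using this
    · filter_upwards [self_mem_nhdsWithin] with s hs
      simp only [Set.mem_compl_iff, Set.mem_singleton_iff] at hs ⊢
      intro h
      exact hs (by linear_combination -h)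
  have hF3 : Tendsto (fun s : ℂ => (s + r1) * Est (-r1) ℓ (-vbar) (1 - s - r1))
      (𝓝[≠] (-r1))
      (𝓝 (-((ℓ : ℂ) ^ (-r1 - 2 * 1) * ((ℓ : ℂ) * riemannZeta (1 + r1))))) := by
    refine Tendsto.congr (fun s => ?_) (hEst.comp hw).neg
    show -((1 - s - r1 - 1) * Est (-r1) ℓ (-vbar) (1 - s - r1)) = _
    ring
  have hF1 : Tendsto (fun s : ℂ =>
      Complex.Gamma (d - s + 1) / Complex.Gamma (d + s + r1 + r2 + 1)) (𝓝[≠] (-r1))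
      (𝓝 (Complex.Gamma (d + r1 + 1) / Complex.Gamma (d + r2 + 1))) := by
    have e1 : d - -r1 + 1 = d + r1 + 1 := by ring
    have e2 : d + -r1 + r1 + r2 + 1 = d + r2 + 1 := by ring
    have h1 : ContinuousAt (fun s : ℂ => Complex.Gamma (d - s + 1)) (-r1) := by
      refine ContinuousAt.comp (f := fun s : ℂ => d - s + 1) (x := -r1) ?_
        ((continuousAt_const.sub continuousAt_id).add continuousAt_const)
      refine (Complex.differentiableAt_Gamma _ ?_).continuousAt
      intro m
      show d - -r1 + 1 ≠ -(m : ℂ)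
      rw [e1]
      exact ne_neg_nat_of_re_pos (by simp; linarith) m
    have h2 : ContinuousAt (fun s : ℂ => Complex.Gamma (d + s + r1 + r2 + 1)) (-r1) := by
      refine ContinuousAt.comp (f := fun s : ℂ => d + s + r1 + r2 + 1) (x := -r1) ?_
        ((((continuousAt_const.add continuousAt_id).add
          continuousAt_const).add continuousAt_const).add continuousAt_const)
      refine (Complex.differentiableAt_Gamma _ ?_).continuousAt
      intro m
      show d + -r1 + r1 + r2 + 1 ≠ -(m : ℂ)
      rw [e2]
      exact ne_neg_nat_of_re_pos (by simp; linarith) m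
    have h3 : Complex.Gamma (d + -r1 + r1 + r2 + 1) ≠ 0 := by
      rw [e2]
      exact Complex.Gamma_ne_zero (ne_neg_nat_of_re_pos (by simp; linarith))
    have h4 := Tendsto.div (h1.tendsto.mono_left (nhdsWithin_le_nhds (s := {(-r1)}ᶜ)))
      (h2.tendsto.mono_left (nhdsWithin_le_nhds (s := {(-r1)}ᶜ))) h3
    simpa only [e1, e2, Pi.div_def] using h4
  have hF2 : Tendsto (fun s : ℂ =>
      ((2 * π * Real.sqrt n / (ℓ : ℝ) : ℝ) : ℂ) ^ (2 * s + r1 + r2 - 1)) (𝓝[≠] (-r1))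
      (𝓝 (((2 * π * Real.sqrt n / (ℓ : ℝ) : ℝ) : ℂ) ^ (2 * (-r1) + r1 + r2 - 1))) := by
    have hc : ContinuousAt (fun s : ℂ =>
        ((2 * π * Real.sqrt n / (ℓ : ℝ) : ℝ) : ℂ) ^ (2 * s + r1 + r2 - 1)) (-r1) := by
      refine ContinuousAt.comp (f := fun s : ℂ => 2 * s + r1 + r2 - 1) (x := -r1)
        (continuousAt_const_cpow hbQ0) ?_
      exact (((continuousAt_const.mul continuousAt_id).add continuousAt_const).add
        continuousAt_const).sub continuousAt_const
    exact hc.tendsto.mono_left (nhdsWithin_le_nhds (s := {(-r1)}ᶜ))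
  have hall := (hF1.mul hF2).mul hF3
  -- identify the function
  have hfeq : ∀ s : ℂ,
      Complex.Gamma (d - s + 1) / Complex.Gamma (d + s + r1 + r2 + 1) *
        ((2 * π * Real.sqrt n / (ℓ : ℝ) : ℝ) : ℂ) ^ (2 * s + r1 + r2 - 1) *
        ((s + r1) * Est (-r1) ℓ (-vbar) (1 - s - r1)) =
      (s + r1) * calE n ℓ vbar r1 r2 d s := by
    intro s
    rw [calE]
    ring
  have hall2 := Tendsto.congr hfeq hall
  -- identify the limit value
  have hpow : ((2 * π * Real.sqrt n / (ℓ : ℝ) : ℝ) : ℂ) ^ (2 * (-r1) + r1 + r2 - 1) *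
      ((ℓ : ℂ) ^ (-r1 - 2 * 1) * (ℓ : ℂ)) =
      ((2 * π * Real.sqrt n : ℝ) : ℂ) ^ (-r1 + r2 - 1) * (ℓ : ℂ) ^ (-r2) := by
    have hargne : ((ℓ : ℝ) : ℂ).arg ≠ π := by
      rw [Complex.arg_ofReal_of_nonneg hℓR.le]
      exact Real.pi_ne_zero.symm
    have key : ∀ a b : ℂ, a + b + 1 = -r2 → (ℓ : ℂ) ^ a * ((ℓ : ℂ) ^ b * (ℓ : ℂ)) =
        (ℓ : ℂ) ^ (-r2 : ℂ) := by
      intro a b h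
      rw [← h, Complex.cpow_add _ _ hℓ0, Complex.cpow_add _ _ hℓ0, Complex.cpow_one]
      ring
    have e3 : (2 * (-r1) + r1 + r2 - 1 : ℂ) = -r1 + r2 - 1 := by ring
    rw [e3]
    rw [show (2 * π * Real.sqrt n / (ℓ : ℝ) : ℝ) = (2 * π * Real.sqrt n) * ((ℓ : ℝ)⁻¹) by ring]
    rw [Complex.ofReal_mul, Complex.mul_cpow_ofReal_nonneg hbR.le (inv_nonneg.mpr hℓR.le),
      Complex.ofReal_inv, Complex.inv_cpow _ _ hargne, ← Complex.cpow_neg,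
      Complex.ofReal_natCast]
    calc ((2 * π * Real.sqrt n : ℝ) : ℂ) ^ (-r1 + r2 - 1 : ℂ) * (ℓ : ℂ) ^ (-(-r1 + r2 - 1) : ℂ) *
          ((ℓ : ℂ) ^ (-r1 - 2 * 1 : ℂ) * (ℓ : ℂ))
        = ((2 * π * Real.sqrt n : ℝ) : ℂ) ^ (-r1 + r2 - 1 : ℂ) *
          ((ℓ : ℂ) ^ (-(-r1 + r2 - 1) : ℂ) * ((ℓ : ℂ) ^ (-r1 - 2 * 1 : ℂ) * (ℓ : ℂ))) := by ring
      _ = _ := by rw [key _ _ (by ring)]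
  have hval : Complex.Gamma (d + r1 + 1) / Complex.Gamma (d + r2 + 1) *
      ((2 * π * Real.sqrt n / (ℓ : ℝ) : ℝ) : ℂ) ^ (2 * (-r1) + r1 + r2 - 1) *
      -((ℓ : ℂ) ^ (-r1 - 2 * 1) * ((ℓ : ℂ) * riemannZeta (1 + r1))) =
      -(Complex.Gamma (d + r1 + 1) / Complex.Gamma (d + r2 + 1)) *
        ((2 * π * Real.sqrt n : ℝ) : ℂ) ^ (-r1 + r2 - 1) * (ℓ : ℂ) ^ (-r2) *
        riemannZeta (1 + r1) := by
    linear_combination (-(Complex.Gamma (d + r1 + 1) / Complex.Gamma (d + r2 + 1)) *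
      riemannZeta (1 + r1)) * hpow
  rw [← hval]
  exact hall2


end
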